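/- Let x : [t_p, t_{p+1}] → ℝⁿ solve the consensus dynamics with nonnegative weights, with initial condition xᵢ(t_p) = 0 for i ∈ S and xⱼ(t_p) = 1 for j ∉ S, where S is a nonempty proper subset of agents. If 0 ≤ xₖ(t) ≤ 1 for all k and t (which holds automatically), then max_{i∈S} xᵢ(t_{p+1}) ≤ 1 − exp(−∫_{t_p}^{t_{p+1}} Σ_{i∈S, j∉S} aᵢⱼ(t) dt) ≤ ∫_{t_p}^{t_{p+1}} Σ_{i∈S, j∉S} aᵢⱼ(t) dt. -/

import Mathlib

open intervalIntegral

private lemma consensus_aux_eps (e sv K : ℝ) (hK : 0 ≤ K)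
    (h : ∀ ε : ℝ, 0 < ε → e - ε * K ≤ 1 - sv) : sv ≤ 1 - e := by
  by_contra hcon
  push_neg at hcon
  have hd : 0 < sv - (1 - e) := by linarith
  have h1 := h ((sv - (1 - e)) / (K + 1)) (by positivity)
  have h2 : (sv - (1 - e)) / (K + 1) * K < sv - (1 - e) := by
    rw [div_mul_eq_mul_div, div_lt_iff₀ (by linarith)]
    nlinarith
  linarith

/-- Starting from the indicator-type initial state (0 on `S`, 1 off
`S`), the maximum over `S` at time `t_{p+1}` is at most
`1 - exp(-∫ Σ_{i∈S,j∉S} a_ij) ≤ ∫ Σ_{i∈S,j∉S} a_ij`. -/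
theorem consensus_max_over_S_upper_bound
    (n : ℕ) (tp tp1 : ℝ) (htp : tp ≤ tp1)
    (x : Fin n → ℝ → ℝ) (a : Fin n → Fin n → ℝ → ℝ)
    (S : Finset (Fin n)) (hS : S.Nonempty) (hSproper : S ≠ Finset.univ)
    (ha_nonneg : ∀ i j t, 0 ≤ a i j t)
    (ha_int : ∀ i j, IntervalIntegrable (a i j) MeasureTheory.volume tp tp1)
    (hx_cont : ∀ i, Continuous (x i))
    (hsol : ∀ i t, t ∈ Set.Icc tp tp1 →
      x i t = x i tp + ∫ s in tp..t, ∑ j, a i j s * (x j s - x i s))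
    (hinit_S : ∀ i ∈ S, x i tp = 0)
    (hinit_notS : ∀ j ∉ S, x j tp = 1)
    (hx_box : ∀ k t, t ∈ Set.Icc tp tp1 → x k t ∈ Set.Icc (0:ℝ) 1) :
    S.sup' hS (fun i => x i tp1)
        ≤ 1 - Real.exp (-(∫ t in tp..tp1, ∑ i ∈ S, ∑ j ∈ Sᶜ, a i j t)) ∧
    1 - Real.exp (-(∫ t in tp..tp1, ∑ i ∈ S, ∑ j ∈ Sᶜ, a i j t))
        ≤ ∫ t in tp..tp1, ∑ i ∈ S, ∑ j ∈ Sᶜ, a i j t := by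
  classical
  set A : ℝ → ℝ := fun t => ∑ i ∈ S, ∑ j ∈ Sᶜ, a i j t with hA
  set R : ℝ → ℝ := fun t => ∑ i ∈ S, ∑ j ∈ S, a i j t with hR
  set M : ℝ → ℝ := fun t => S.sup' hS (fun i => x i t) with hM
  have hAnn : ∀ t, 0 ≤ A t := fun t =>
    Finset.sum_nonneg fun i _ => Finset.sum_nonneg fun j _ => ha_nonneg i j t
  have hRnn : ∀ t, 0 ≤ R t := fun t =>
    Finset.sum_nonneg fun i _ => Finset.sum_nonneg fun j _ => ha_nonneg i j t
  -- integrability on subintervals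
  have hsubint : ∀ (i j : Fin n) (t1 t2 : ℝ), t1 ∈ Set.Icc tp tp1 → t2 ∈ Set.Icc tp tp1 →
      IntervalIntegrable (a i j) MeasureTheory.volume t1 t2 := by
    intro i j t1 t2 h1 h2
    refine (ha_int i j).mono_set (Set.uIcc_subset_uIcc ?_ ?_) <;>
      rw [Set.uIcc_of_le htp] <;> assumption
  have hrowint : ∀ (i : Fin n) (U : Finset (Fin n)) (t1 t2 : ℝ),
      t1 ∈ Set.Icc tp tp1 → t2 ∈ Set.Icc tp tp1 →
      IntervalIntegrable (fun t => ∑ j ∈ U, a i j t) MeasureTheory.volume t1 t2 := by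
    intro i U t1 t2 h1 h2
    have e : (fun t => ∑ j ∈ U, a i j t) = ∑ j ∈ U, (fun t => a i j t) := by
      funext t; simp
    rw [e]
    exact IntervalIntegrable.sum U fun j _ => hsubint i j t1 t2 h1 h2
  have hsumint : ∀ (T U : Finset (Fin n)) (t1 t2 : ℝ),
      t1 ∈ Set.Icc tp tp1 → t2 ∈ Set.Icc tp tp1 →
      IntervalIntegrable (fun t => ∑ i ∈ T, ∑ j ∈ U, a i j t) MeasureTheory.volume t1 t2 := by
    intro T U t1 t2 h1 h2
    have e : (fun t => ∑ i ∈ T, ∑ j ∈ U, a i j t)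
        = ∑ i ∈ T, (fun t => ∑ j ∈ U, a i j t) := by
      funext t; simp
    rw [e]
    exact IntervalIntegrable.sum T fun i _ => hrowint i U t1 t2 h1 h2
  have hhint : ∀ (i : Fin n) (t1 t2 : ℝ), t1 ∈ Set.Icc tp tp1 → t2 ∈ Set.Icc tp tp1 →
      IntervalIntegrable (fun s => ∑ j, a i j s * (x j s - x i s))
        MeasureTheory.volume t1 t2 := by
    intro i t1 t2 h1 h2
    have e : (fun s => ∑ j, a i j s * (x j s - x i s))
        = ∑ j : Fin n, (fun s => a i j s * (x j s - x i s)) := by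
      funext s; simp
    rw [e]
    exact IntervalIntegrable.sum _ fun j _ =>
      (hsubint i j t1 t2 h1 h2).mul_continuousOn ((hx_cont j).sub (hx_cont i)).continuousOn
  -- difference form of the solution
  have hdiff : ∀ (i : Fin n) (t1 t2 : ℝ), t1 ∈ Set.Icc tp tp1 → t2 ∈ Set.Icc tp tp1 →
      x i t2 - x i t1 = ∫ s in t1..t2, ∑ j, a i j s * (x j s - x i s) := by
    intro i t1 t2 h1 h2
    have e1 := hsol i t1 h1
    have e2 := hsol i t2 h2
    have hadd := integral_add_adjacent_intervals
      (hhint i tp t1 ⟨le_rfl, htp⟩ h1) (hhint i t1 t2 h1 h2)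
    linarith
  -- key one-interval estimate
  have key : ∀ t1 t2 : ℝ, tp ≤ t1 → t1 ≤ t2 → t2 ≤ tp1 → ∀ ε : ℝ, 0 ≤ ε →
      (∀ (k : Fin n) (s : ℝ), s ∈ Set.Icc t1 t2 → |x k s - x k t2| ≤ ε) →
      (1 - M t1) - ε * (2 * (∫ s in t1..t2, R s) + ∫ s in t1..t2, A s)
        ≤ (1 - M t2) * (1 + ∫ s in t1..t2, A s) := by
    intro t1 t2 hpt1 h12 ht2p ε hε hosc
    have h1m : t1 ∈ Set.Icc tp tp1 := ⟨hpt1, le_trans h12 ht2p⟩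
    have h2m : t2 ∈ Set.Icc tp tp1 := ⟨le_trans hpt1 h12, ht2p⟩
    obtain ⟨i, hiS, hiM⟩ := Finset.exists_mem_eq_sup' hS (fun i => x i t2)
    have hM2le : M t2 ≤ 1 := Finset.sup'_le _ _ fun k hk => (hx_box k t2 h2m).2
    set c : ℝ := 1 - M t2 + ε with hc
    have hcnn : 0 ≤ c := by simp only [hc]; linarith
    have hpt : ∀ s ∈ Set.Icc t1 t2,
        (∑ j, a i j s * (x j s - x i s)) ≤ 2 * ε * R s + c * (∑ j ∈ Sᶜ, a i j s) := by
      intro s hs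
      have hsmem : s ∈ Set.Icc tp tp1 := ⟨le_trans hpt1 hs.1, le_trans hs.2 ht2p⟩
      have split : (∑ j, a i j s * (x j s - x i s))
          = (∑ j ∈ S, a i j s * (x j s - x i s))
            + ∑ j ∈ Sᶜ, a i j s * (x j s - x i s) :=
        (Finset.sum_add_sum_compl S _).symm
      have o2 := hosc i s hs
      rw [abs_le] at o2
      have hb1 : (∑ j ∈ S, a i j s * (x j s - x i s)) ≤ (∑ j ∈ S, a i j s) * (2 * ε) := by
        rw [Finset.sum_mul]
        refine Finset.sum_le_sum fun j hj => ?_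
        refine mul_le_mul_of_nonneg_left ?_ (ha_nonneg i j s)
        have o1 := hosc j s hs
        rw [abs_le] at o1
        have hj2 : x j t2 ≤ x i t2 := by
          rw [← hiM]; exact Finset.le_sup' (fun i' => x i' t2) hj
        linarith [o1.1, o1.2, o2.1, o2.2]
      have hb2 : (∑ j ∈ Sᶜ, a i j s * (x j s - x i s)) ≤ (∑ j ∈ Sᶜ, a i j s) * c := by
        rw [Finset.sum_mul]
        refine Finset.sum_le_sum fun j hj => ?_
        refine mul_le_mul_of_nonneg_left ?_ (ha_nonneg i j s)
        have hxj := (hx_box j s hsmem).2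
        have hMi : M t2 = x i t2 := hiM
        simp only [hc]
        linarith [o2.1]
      have hb3 : (∑ j ∈ S, a i j s) ≤ R s :=
        Finset.single_le_sum (f := fun i' => ∑ j ∈ S, a i' j s)
          (fun i' _ => Finset.sum_nonneg fun j _ => ha_nonneg i' j s) hiS
      have hb4 : (∑ j ∈ S, a i j s) * (2 * ε) ≤ R s * (2 * ε) :=
        mul_le_mul_of_nonneg_right hb3 (by linarith)
      nlinarith [split, hb1, hb2, hb4]
    have hIntR := hsumint S S t1 t2 h1m h2m
    have hIntA := hsumint S Sᶜ t1 t2 h1m h2m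
    have hIntB := hrowint i Sᶜ t1 t2 h1m h2m
    have hIntRHS : IntervalIntegrable
        (fun s => 2 * ε * R s + c * (∑ j ∈ Sᶜ, a i j s)) MeasureTheory.volume t1 t2 :=
      (hIntR.const_mul _).add (hIntB.const_mul _)
    have hmono := integral_mono_on h12 (hhint i t1 t2 h1m h2m) hIntRHS hpt
    rw [integral_add (hIntR.const_mul _) (hIntB.const_mul _),
        integral_const_mul, integral_const_mul] at hmono
    have hBA : (∫ s in t1..t2, ∑ j ∈ Sᶜ, a i j s) ≤ ∫ s in t1..t2, A s := by
      refine integral_mono_on h12 hIntB hIntA fun s hs => ?_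
      exact Finset.single_le_sum (f := fun i' => ∑ j ∈ Sᶜ, a i' j s)
        (fun i' _ => Finset.sum_nonneg fun j _ => ha_nonneg i' j s) hiS
    have hRint_nn : 0 ≤ ∫ s in t1..t2, R s :=
      integral_nonneg h12 fun u _ => hRnn u
    have hAint_nn : 0 ≤ ∫ s in t1..t2, A s :=
      integral_nonneg h12 fun u _ => hAnn u
    have hdiff' := hdiff i t1 t2 h1m h2m
    have hxt1 : x i t1 ≤ M t1 := Finset.le_sup' (fun i' => x i' t1) hiS
    have hc2 : c * (∫ s in t1..t2, ∑ j ∈ Sᶜ, a i j s) ≤ c * (∫ s in t1..t2, A s) :=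
      mul_le_mul_of_nonneg_left hBA hcnn
    have hMi : M t2 = x i t2 := hiM
    nlinarith [hmono, hdiff', hxt1, hc2]
  -- uniform continuity
  have unif : ∀ ε : ℝ, 0 < ε → ∃ δ : ℝ, 0 < δ ∧ ∀ (k : Fin n) (s t' : ℝ),
      s ∈ Set.Icc tp tp1 → t' ∈ Set.Icc tp tp1 → |s - t'| < δ → |x k s - x k t'| ≤ ε := by
    intro ε hε
    have hF : ContinuousOn (fun t => (fun k : Fin n => x k t)) (Set.Icc tp tp1) :=
      (continuous_pi fun k => hx_cont k).continuousOn
    have hUC := isCompact_Icc.uniformContinuousOn_of_continuous hF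
    rw [Metric.uniformContinuousOn_iff] at hUC
    obtain ⟨δ, hδ, H⟩ := hUC ε hε
    refine ⟨δ, hδ, fun k s t' hs ht hd => ?_⟩
    have h1 := H s hs t' ht (by rwa [Real.dist_eq])
    have h2 := dist_le_pi_dist (fun k : Fin n => x k s) (fun k : Fin n => x k t') k
    rw [Real.dist_eq] at h2
    exact le_of_lt (lt_of_le_of_lt h2 h1)
  -- main estimate for each ε > 0
  have final : ∀ ε : ℝ, 0 < ε →
      Real.exp (-(∫ t in tp..tp1, A t))
        - ε * (2 * (∫ t in tp..tp1, R t) + ∫ t in tp..tp1, A t) ≤ 1 - M tp1 := by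
    intro ε hε
    obtain ⟨δ, hδ, hδ'⟩ := unif ε hε
    set N : ℕ := Nat.ceil ((tp1 - tp) / δ) + 1 with hN
    have hNpos : 0 < (N : ℝ) := by positivity
    set st : ℕ → ℝ := fun k => tp + k * ((tp1 - tp) / N) with hst
    have hstepnn : 0 ≤ (tp1 - tp) / (N : ℝ) := by
      apply div_nonneg (by linarith) (le_of_lt hNpos)
    have hstep_small : (tp1 - tp) / (N : ℝ) < δ := by
      rw [div_lt_iff₀ hNpos]
      have h1 : ((tp1 - tp) / δ) ≤ (Nat.ceil ((tp1 - tp) / δ) : ℝ) := Nat.le_ceil _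
      have h2 : (N : ℝ) = (Nat.ceil ((tp1 - tp) / δ) : ℝ) + 1 := by
        simp [hN]
      have h3 : (tp1 - tp) = ((tp1 - tp) / δ) * δ := by
        field_simp
      nlinarith
    have hst0 : st 0 = tp := by simp [hst]
    have hstN : st N = tp1 := by
      simp only [hst]
      field_simp
      ring
    have hstmono : ∀ k l : ℕ, k ≤ l → st k ≤ st l := by
      intro k l hkl
      simp only [hst]
      have : (k : ℝ) ≤ (l : ℝ) := by exact_mod_cast hkl
      nlinarith
    have hstmem : ∀ k : ℕ, k ≤ N → st k ∈ Set.Icc tp tp1 := by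
      intro k hk
      constructor
      · rw [← hst0]; exact hstmono 0 k (Nat.zero_le _)
      · rw [← hstN]; exact hstmono k N hk
    have hMle1 : ∀ t, t ∈ Set.Icc tp tp1 → M t ≤ 1 := fun t ht =>
      Finset.sup'_le _ _ fun k hk => (hx_box k t ht).2
    -- induction
    have main : ∀ k : ℕ, k ≤ N →
        Real.exp (-(∫ t in tp..st k, A t))
          - ε * (2 * (∫ t in tp..st k, R t) + ∫ t in tp..st k, A t) ≤ 1 - M (st k) := by
      intro k
      induction k with
      | zero =>
        intro _
        rw [hst0]
        simp only [integral_same]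
        have hMtp : M tp ≤ 0 := Finset.sup'_le _ _ fun i hi => le_of_eq (hinit_S i hi)
        simp only [neg_zero, Real.exp_zero]
        linarith
      | succ k ih =>
        intro hk1
        have hk : k ≤ N := Nat.le_of_succ_le hk1
        have ihk := ih hk
        have hm1 : st k ∈ Set.Icc tp tp1 := hstmem k hk
        have hm2 : st (k + 1) ∈ Set.Icc tp tp1 := hstmem (k + 1) hk1
        have h12 : st k ≤ st (k + 1) := hstmono k (k + 1) (Nat.le_succ _)
        -- oscillation control on [st k, st (k+1)]
        have hosc : ∀ (k' : Fin n) (s : ℝ), s ∈ Set.Icc (st k) (st (k + 1)) →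
            |x k' s - x k' (st (k + 1))| ≤ ε := by
          intro k' s hs
          have hsmem : s ∈ Set.Icc tp tp1 := ⟨le_trans hm1.1 hs.1, le_trans hs.2 hm2.2⟩
          refine hδ' k' s (st (k + 1)) hsmem hm2 ?_
          have hlen : st (k + 1) - st k = (tp1 - tp) / N := by
            simp only [hst]
            push_cast
            ring
          rw [abs_sub_comm, abs_of_nonneg (by linarith [hs.2])]
          have h1 : st (k + 1) - s ≤ (tp1 - tp) / N := by
            rw [← hlen]; linarith [hs.1]
          exact lt_of_le_of_lt h1 hstep_small
        have hkey := key (st k) (st (k + 1)) hm1.1 h12 hm2.2 ε (le_of_lt hε) hosc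
        -- abbreviations
        set α : ℝ := ∫ s in st k..st (k + 1), A s with hα
        set β : ℝ := ∫ s in st k..st (k + 1), R s with hβ
        have hαnn : 0 ≤ α := integral_nonneg h12 fun u _ => hAnn u
        have hβnn : 0 ≤ β := integral_nonneg h12 fun u _ => hRnn u
        have haddA : (∫ t in tp..st k, A t) + α = ∫ t in tp..st (k + 1), A t :=
          integral_add_adjacent_intervals (hsumint S Sᶜ tp (st k) ⟨le_rfl, htp⟩ hm1)
            (hsumint S Sᶜ (st k) (st (k + 1)) hm1 hm2)
        have haddR : (∫ t in tp..st k, R t) + β = ∫ t in tp..st (k + 1), R t :=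
          integral_add_adjacent_intervals (hsumint S S tp (st k) ⟨le_rfl, htp⟩ hm1)
            (hsumint S S (st k) (st (k + 1)) hm1 hm2)
        -- from hkey : (1 - M (st k)) - ε * (2*β + α) ≤ (1 - M (st (k+1))) * (1 + α)
        have hm1nn : 0 ≤ 1 - M (st k) := by linarith [hMle1 (st k) hm1]
        have hCnn : 0 ≤ ε * (2 * β + α) := by positivity
        have hexp1 : (1 + α) * Real.exp (-α) ≤ 1 := by
          have h1 : α + 1 ≤ Real.exp α := Real.add_one_le_exp α
          have h2 : 0 < Real.exp (-α) := Real.exp_pos _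
          have h3 : (α + 1) * Real.exp (-α) ≤ Real.exp α * Real.exp (-α) :=
            mul_le_mul_of_nonneg_right h1 (le_of_lt h2)
          rw [← Real.exp_add] at h3
          simp at h3
          linarith
        have hstep2 : (1 - M (st k)) * Real.exp (-α) - ε * (2 * β + α)
            ≤ 1 - M (st (k + 1)) := by
          have hpos : (0:ℝ) < 1 + α := by linarith
          have h3 : ((1 - M (st k)) * Real.exp (-α) - ε * (2 * β + α)) * (1 + α)
              ≤ (1 - M (st k)) - ε * (2 * β + α) := by
            have ha1 : (1 - M (st k)) * ((1 + α) * Real.exp (-α)) ≤ (1 - M (st k)) * 1 :=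
              mul_le_mul_of_nonneg_left hexp1 hm1nn
            have ha2 : 0 ≤ ε * (2 * β + α) * α := mul_nonneg hCnn hαnn
            nlinarith
          have h4 := le_trans h3 hkey
          exact le_of_mul_le_mul_right (by linarith) hpos
        -- combine with ih
        have hEnn : 0 ≤ 2 * (∫ t in tp..st k, R t) + ∫ t in tp..st k, A t := by
          have h5 : 0 ≤ ∫ t in tp..st k, R t :=
            integral_nonneg hm1.1 fun u _ => hRnn u
          have h6 : 0 ≤ ∫ t in tp..st k, A t :=
            integral_nonneg hm1.1 fun u _ => hAnn u
          linarith
        have hexple : Real.exp (-α) ≤ 1 := by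
          rw [Real.exp_le_one_iff]; linarith
        have hmul : (Real.exp (-(∫ t in tp..st k, A t))
              - ε * (2 * (∫ t in tp..st k, R t) + ∫ t in tp..st k, A t)) * Real.exp (-α)
            ≤ (1 - M (st k)) * Real.exp (-α) :=
          mul_le_mul_of_nonneg_right ihk (le_of_lt (Real.exp_pos _))
        have hexpadd : Real.exp (-(∫ t in tp..st k, A t)) * Real.exp (-α)
            = Real.exp (-((∫ t in tp..st k, A t) + α)) := by
          rw [← Real.exp_add]
          congr 1
          ring
        have herr : ε * (2 * (∫ t in tp..st k, R t) + ∫ t in tp..st k, A t) * Real.exp (-α)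
            ≤ ε * (2 * (∫ t in tp..st k, R t) + ∫ t in tp..st k, A t) :=
          mul_le_of_le_one_right (mul_nonneg (le_of_lt hε) hEnn) hexple
        rw [← haddA, ← haddR, ← hexpadd]
        set P : ℝ := ∫ t in tp..st k, A t with hP
        set Q : ℝ := ∫ t in tp..st k, R t with hQ
        set X : ℝ := Real.exp (-P) with hX
        set E : ℝ := Real.exp (-α) with hE
        calc X * E - ε * (2 * (Q + β) + (P + α))
            = (X * E - ε * (2 * Q + P) - ε * (2 * β + α)) := by ring
          _ ≤ X * E - ε * (2 * Q + P) * E - ε * (2 * β + α) := by linarith [herr]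
          _ = (X - ε * (2 * Q + P)) * E - ε * (2 * β + α) := by ring
          _ ≤ (1 - M (st k)) * E - ε * (2 * β + α) := by linarith [hmul]
          _ ≤ 1 - M (st (k + 1)) := hstep2
    have := main N le_rfl
    rw [hstN] at this
    exact this
  -- conclude
  have hInn : 0 ≤ ∫ t in tp..tp1, A t := integral_nonneg htp fun u _ => hAnn u
  have hJnn : 0 ≤ ∫ t in tp..tp1, R t := integral_nonneg htp fun u _ => hRnn u
  constructor
  · -- first conjunct
    exact consensus_aux_eps _ _ _ (by linarith) final
  · -- second conjunct
    have := Real.add_one_le_exp (-(∫ t in tp..tp1, A t))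
    linarith
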